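/- Let Γ₁ be a numerical semigroup, n, a coprime positive integers with a ∈ Γ₁ and n ≥ 2, and set Γ = nΓ₁ + aℕ (a gluing). Then the conductor satisfies c(Γ) = n·c(Γ₁) + (n−1)(a−1). -/

import Mathlib

/-- Delorme's conductor formula for a gluing `Γ = nΓ₁ + aℕ` of a numerical
semigroup `Γ₁` with ℕ: `c(Γ) = n·c(Γ₁) + (n−1)(a−1)`. -/
theorem stmt2 (Γ₁ : AddSubmonoid ℕ) (hfin : (Set.univ \ (Γ₁ : Set ℕ)).Finite)
    (n a : ℕ) (hn : 2 ≤ n) (ha : 0 < a) (hcop : Nat.Coprime n a) (haΓ : a ∈ Γ₁) :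
    sInf {c : ℕ | ∀ m : ℕ, c ≤ m → ∃ s ∈ Γ₁, ∃ k : ℕ, m = n * s + k * a}
      = n * sInf {c : ℕ | ∀ m : ℕ, c ≤ m → m ∈ Γ₁} + (n - 1) * (a - 1) := by
  haveI : NeZero n := ⟨by omega⟩
  set c₁ := sInf {c : ℕ | ∀ m : ℕ, c ≤ m → m ∈ Γ₁} with hc₁def
  obtain ⟨b, hb⟩ := hfin.bddAbove
  have hS₁ne : {c : ℕ | ∀ m : ℕ, c ≤ m → m ∈ Γ₁}.Nonempty := by
    refine ⟨b + 1, fun m hm => ?_⟩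
    by_contra hmem
    have h1 : m ∈ Set.univ \ (Γ₁ : Set ℕ) := ⟨trivial, hmem⟩
    have := hb h1
    omega
  have hc₁mem : ∀ m, c₁ ≤ m → m ∈ Γ₁ := Nat.sInf_mem hS₁ne
  have hFrob : 1 ≤ c₁ → (c₁ - 1) ∉ Γ₁ := by
    intro h1 hmem
    have hS : c₁ - 1 ∈ {c : ℕ | ∀ m : ℕ, c ≤ m → m ∈ Γ₁} := by
      intro m hm
      rcases Nat.eq_or_lt_of_le hm with h | h
      · exact h ▸ hmem
      · exact hc₁mem m (by omega)
    have := Nat.sInf_le hS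
    omega
  have hmul : ∀ t : ℕ, t * a ∈ Γ₁ := by
    intro t
    simpa [nsmul_eq_mul] using AddSubmonoid.nsmul_mem Γ₁ haΓ t
  have hna : (n - 1) * a = (n - 1) * (a - 1) + (n - 1) := by
    obtain ⟨a', ha'⟩ : ∃ a', a = a' + 1 := ⟨a - 1, by omega⟩
    subst ha'
    simp [Nat.mul_succ]
  -- upper bound: C is in the conductor set of Γ
  have hCmem : n * c₁ + (n - 1) * (a - 1)
      ∈ {c : ℕ | ∀ m : ℕ, c ≤ m → ∃ s ∈ Γ₁, ∃ k : ℕ, m = n * s + k * a} := by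
    intro m hm
    set k := ((m : ZMod n) * (a : ZMod n)⁻¹).val with hkdef
    have hkn : k < n := ZMod.val_lt _
    have haunit : IsUnit (a : ZMod n) := (ZMod.isUnit_iff_coprime a n).mpr hcop.symm
    have hcast : ((k * a : ℕ) : ZMod n) = (m : ZMod n) := by
      push_cast
      rw [hkdef, ZMod.natCast_val, ZMod.cast_id, mul_assoc,
        ZMod.inv_mul_of_unit _ haunit, mul_one]
    have hmod : k * a ≡ m [MOD n] := (ZMod.natCast_eq_natCast_iff _ _ _).mp hcast
    have hka_le : k * a ≤ m := by
      by_contra hlt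
      push_neg at hlt
      have hdvd : n ∣ k * a - m := (Nat.modEq_iff_dvd' (le_of_lt hlt)).mp hmod.symm
      have h1 : k * a ≤ (n - 1) * a := Nat.mul_le_mul_right a (by omega)
      have h2 : 0 < k * a - m := by omega
      have h3 := Nat.le_of_dvd h2 hdvd
      omega
    have hdvd : n ∣ m - k * a := (Nat.modEq_iff_dvd' hka_le).mp hmod
    obtain ⟨s, hs⟩ := hdvd
    have hms : m = n * s + k * a := by omega
    have h1 : k * a ≤ (n - 1) * a := Nat.mul_le_mul_right a (by omega)
    have hsge : c₁ ≤ s := by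
      have key : n * c₁ < n * (s + 1) := by
        have e1 : n * (s + 1) = n * s + n := by ring
        omega
      have := Nat.lt_of_mul_lt_mul_left key
      omega
    exact ⟨s, hc₁mem s hsge, k, hms⟩
  refine le_antisymm (Nat.sInf_le hCmem) ?_
  by_contra hlt
  push_neg at hlt
  set C := n * c₁ + (n - 1) * (a - 1) with hCdef
  have hC1 : 1 ≤ C := by omega
  have hS₂ne : {c : ℕ | ∀ m : ℕ, c ≤ m → ∃ s ∈ Γ₁, ∃ k : ℕ, m = n * s + k * a}.Nonempty :=
    ⟨C, hCmem⟩
  have hmem := Nat.sInf_mem hS₂ne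
  obtain ⟨s, hsΓ, k, heq⟩ := hmem (C - 1) (by omega)
  -- k*a ≡ (n-1)*a mod n
  have hCeq : C - 1 + n = n * c₁ + (n - 1) * a := by omega
  have m0 : n * s ≡ 0 [MOD n] := (Nat.modEq_zero_iff_dvd).mpr ⟨s, rfl⟩
  have m1 : k * a ≡ C - 1 [MOD n] := by
    calc k * a = 0 + k * a := by omega
    _ ≡ n * s + k * a [MOD n] := (m0.symm).add_right _
    _ = C - 1 := heq.symm
  have m2 : C - 1 ≡ (n - 1) * a [MOD n] := by
    have : C - 1 + n ≡ (n - 1) * a + n [MOD n] := by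
      rw [hCeq]
      have : n * c₁ ≡ 0 [MOD n] := (Nat.modEq_zero_iff_dvd).mpr ⟨c₁, rfl⟩
      calc n * c₁ + (n - 1) * a ≡ 0 + (n - 1) * a [MOD n] := this.add_right _
      _ = (n - 1) * a := by omega
      _ ≡ (n - 1) * a + n [MOD n] := (Nat.modEq_iff_dvd' (by omega)).mpr ⟨1, by omega⟩
    exact (Nat.ModEq.add_right_cancel' n this)
  have m3 : k ≡ n - 1 [MOD n] :=
    Nat.ModEq.cancel_right_of_coprime (by simpa [Nat.Coprime] using hcop) (m1.trans m2)
  have hkmod : k % n = n - 1 := by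
    have := m3
    unfold Nat.ModEq at this
    rw [this, Nat.mod_eq_of_lt (by omega)]
  have hkge : n - 1 ≤ k := by have := Nat.mod_le k n; omega
  by_cases hc0 : c₁ = 0
  · -- then k*a ≥ (n-1)*a > C - 1, contradiction
    have h1 : (n - 1) * a ≤ k * a := Nat.mul_le_mul_right a hkge
    have h2 : n * c₁ = 0 := by rw [hc0]; ring
    omega
  · -- c₁ ≥ 1 : write k = n*t + (n-1)
    have hdm := Nat.div_add_mod k n
    set t := k / n with htdef
    have hk : k = n * t + (n - 1) := by omega
    have key : n * (s + t * a + 1) = n * c₁ := by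
      have e1 : k * a = n * (t * a) + (n - 1) * a := by rw [hk]; ring
      have e2 : n * (s + t * a + 1) = n * s + n * (t * a) + n := by ring
      omega
    have hc : s + t * a + 1 = c₁ := Nat.eq_of_mul_eq_mul_left (by omega) key
    have : c₁ - 1 ∈ Γ₁ := by
      have := AddSubmonoid.add_mem Γ₁ hsΓ (hmul t)
      have e : c₁ - 1 = s + t * a := by omega
      rwa [e]
    exact hFrob (by omega) this
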